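/- Let k be a field and n ≥ 1. For every invertible matrix A ∈ GL_n(k) there exists a permutation σ ∈ S_n and invertible upper triangular matrices b₁, b₂ ∈ GL_n(k) such that A = b₁ · P_σ · b₂, where P_σ is the permutation matrix of σ. (Existence part of the Bruhat decomposition GL_n(k) = ⋃_{σ∈S_n} B P_σ B.) -/

import Mathlib

/-- A square matrix is upper triangular if all entries below the diagonal vanish. -/
def IsUpperTriangular {k : Type*} [Field k] {n : ℕ} (A : Matrix (Fin n) (Fin n) k) : Prop :=
  ∀ i j : Fin n, j < i → A i j = 0

/-- The permutation matrix of `σ`, with `(P_σ)_{i,j} = 1` if `i = σ j` and `0` otherwise. -/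
def permMat {k : Type*} [Field k] {n : ℕ} (σ : Equiv.Perm (Fin n)) :
    Matrix (Fin n) (Fin n) k :=
  Matrix.of fun i j => if i = σ j then 1 else 0

section Aux

variable {k : Type*} [Field k]

lemma IsUpperTriangular.blockTriangular {n : ℕ} {U : Matrix (Fin n) (Fin n) k}
    (h : IsUpperTriangular U) : U.BlockTriangular id := fun i j hij => h i j hij

lemma IsUpperTriangular.mul {n : ℕ} {U V : Matrix (Fin n) (Fin n) k}
    (hU : IsUpperTriangular U) (hV : IsUpperTriangular V) : IsUpperTriangular (U * V) :=
  fun i j hij => hU.blockTriangular.mul hV.blockTriangular hij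

lemma IsUpperTriangular.inv {n : ℕ} {U : Matrix (Fin n) (Fin n) k}
    (h : IsUpperTriangular U) (hd : U.det ≠ 0) : IsUpperTriangular U⁻¹ := by
  have : Invertible U := U.invertibleOfIsUnitDet (isUnit_iff_ne_zero.mpr hd)
  intro i j hij
  exact Matrix.blockTriangular_inv_of_blockTriangular h.blockTriangular hij

lemma det_inv_ne_zero {n : ℕ} {U : Matrix (Fin n) (Fin n) k} (hd : U.det ≠ 0) :
    U⁻¹.det ≠ 0 := by
  have h1 : U⁻¹ * U = 1 := Matrix.nonsing_inv_mul U (isUnit_iff_ne_zero.mpr hd)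
  have := congrArg Matrix.det h1
  rw [Matrix.det_mul, Matrix.det_one] at this
  exact left_ne_zero_of_mul_eq_one this

lemma permMat_mul_apply {n : ℕ} (σ : Equiv.Perm (Fin n)) (X : Matrix (Fin n) (Fin n) k)
    (i b : Fin n) : ((permMat σ : Matrix (Fin n) (Fin n) k) * X) i b = X (σ.symm i) b := by
  rw [Matrix.mul_apply]
  have : ∀ a, (permMat σ : Matrix (Fin n) (Fin n) k) i a * X a b
      = if a = σ.symm i then X a b else 0 := by
    intro a
    by_cases h : a = σ.symm i
    · subst h; simp [permMat]
    · have : i ≠ σ a := fun hh => h (by simp [hh])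
      simp [permMat, this, h]
  simp_rw [this]
  simp

/-- Extend an `n × n` matrix to an `(n+1) × (n+1)` matrix by inserting a `1` at the
diagonal spot `(j, j)` and zeros elsewhere in row and column `j`. -/
def ext1 {n : ℕ} (j : Fin (n + 1)) (C : Matrix (Fin n) (Fin n) k) :
    Matrix (Fin (n + 1)) (Fin (n + 1)) k :=
  Matrix.of fun a b =>
    match finSuccEquiv' j a, finSuccEquiv' j b with
    | none, none => 1
    | some a', some b' => C a' b'
    | _, _ => 0

lemma ext1_apply_succAbove {n : ℕ} (j : Fin (n + 1)) (C : Matrix (Fin n) (Fin n) k)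
    (a b : Fin n) : ext1 j C (j.succAbove a) (j.succAbove b) = C a b := by
  simp [ext1, finSuccEquiv'_succAbove]

lemma ext1_apply_self {n : ℕ} (j : Fin (n + 1)) (C : Matrix (Fin n) (Fin n) k) :
    ext1 j C j j = 1 := by
  simp [ext1, finSuccEquiv'_at]

lemma ext1_apply_row {n : ℕ} (j : Fin (n + 1)) (C : Matrix (Fin n) (Fin n) k) (b : Fin (n + 1)) :
    ext1 j C j b = if b = j then 1 else 0 := by
  by_cases h : b = j
  · subst h; simp [ext1_apply_self]
  · obtain ⟨b', rfl⟩ := Fin.exists_succAbove_eq h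
    rw [if_neg (Fin.succAbove_ne j b')]
    simp [ext1, finSuccEquiv'_at, finSuccEquiv'_succAbove]

lemma ext1_apply_col {n : ℕ} (j : Fin (n + 1)) (C : Matrix (Fin n) (Fin n) k) (a : Fin n) :
    ext1 j C (j.succAbove a) j = 0 := by
  simp [ext1, finSuccEquiv'_at, finSuccEquiv'_succAbove]

lemma ext1_upperTriangular {n : ℕ} (j : Fin (n + 1)) {C : Matrix (Fin n) (Fin n) k}
    (hC : IsUpperTriangular C) : IsUpperTriangular (ext1 j C) := by
  intro a b hlt
  by_cases ha : a = j
  · subst ha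
    rw [ext1_apply_row]
    simp [Fin.ne_of_lt hlt]  -- b < a = j so b ≠ j
  · obtain ⟨a', rfl⟩ := Fin.exists_succAbove_eq ha
    by_cases hb : b = j
    · rw [hb]; exact ext1_apply_col j C a'
    · obtain ⟨b', rfl⟩ := Fin.exists_succAbove_eq hb
      rw [ext1_apply_succAbove]
      exact hC a' b' (Fin.succAbove_lt_succAbove_iff.mp hlt)

lemma ext1_det {n : ℕ} (j : Fin (n + 1)) (C : Matrix (Fin n) (Fin n) k) :
    (ext1 j C).det = C.det := by
  rw [Matrix.det_succ_row (ext1 j C) j]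
  rw [Finset.sum_eq_single j]
  · rw [ext1_apply_self]
    have hsub : (ext1 j C).submatrix j.succAbove j.succAbove = C := by
      ext a b; simp [ext1_apply_succAbove]
    rw [hsub]
    have : (-1 : k) ^ ((j : ℕ) + (j : ℕ)) = 1 := by
      rw [← two_mul, pow_mul]; norm_num
    rw [this]; ring
  · intro b _ hb
    rw [ext1_apply_row]
    simp [hb]
  · intro h; exact absurd (Finset.mem_univ j) h

end Aux

section Main

variable {k : Type*} [Field k]

lemma bruhat_matrix : ∀ (n : ℕ) (M : Matrix (Fin n) (Fin n) k), M.det ≠ 0 →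
    ∃ (σ : Equiv.Perm (Fin n)) (b₁ b₂ : Matrix (Fin n) (Fin n) k),
      IsUpperTriangular b₁ ∧ IsUpperTriangular b₂ ∧ b₁.det ≠ 0 ∧ b₂.det ≠ 0 ∧
      M = b₁ * permMat σ * b₂ := by
  intro n
  induction n with
  | zero =>
    intro M _
    refine ⟨1, 1, 1, ?_, ?_, by simp, by simp, ?_⟩
    · intro i _ _; exact i.elim0
    · intro i _ _; exact i.elim0
    · ext i _; exact i.elim0
  | succ n ih =>
    intro M hMdet
    classical
    set L := Fin.last n with hL
    -- last row is nonzero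
    have hrow : ∃ b, M L b ≠ 0 := by
      by_contra h
      push_neg at h
      exact hMdet (Matrix.det_eq_zero_of_row_eq_zero L h)
    obtain ⟨b0, hb0⟩ := hrow
    set S := Finset.univ.filter (fun b => M L b ≠ 0) with hS_def
    have hS : S.Nonempty := ⟨b0, by simp [hS_def, hb0]⟩
    set j := S.min' hS with hj_def
    have hj : M L j ≠ 0 := (Finset.mem_filter.mp (S.min'_mem hS)).2
    have hmin : ∀ b, b < j → M L b = 0 := by
      intro b hb
      by_contra h
      exact absurd (S.min'_le b (Finset.mem_filter.mpr ⟨Finset.mem_univ b, h⟩)) (not_le.mpr hb)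
    set c := M L j with hc_def
    -- column elimination matrix u
    set u : Matrix (Fin (n + 1)) (Fin (n + 1)) k :=
      Matrix.of (fun a b => if a = b then (if a = j then c⁻¹ else 1)
        else if a = j ∧ j < b then -(M L b) * c⁻¹ else 0) with hu_def
    have hu_ut : IsUpperTriangular u := by
      intro a b hlt
      have h1 : a ≠ b := (Fin.ne_of_lt hlt).symm
      have h2 : ¬(a = j ∧ j < b) := by
        rintro ⟨rfl, hjb⟩
        exact absurd (hjb.trans hlt) (lt_irrefl _)
      simp [hu_def, h1, h2]
    have hu_diag : ∀ a, u a a = if a = j then c⁻¹ else 1 := by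
      intro a; simp [hu_def]
    have hu_det : u.det ≠ 0 := by
      rw [Matrix.det_of_upperTriangular hu_ut.blockTriangular]
      rw [Finset.prod_ne_zero_iff]
      intro a _
      rw [hu_diag]
      split
      · exact inv_ne_zero hj
      · exact one_ne_zero
    set M₁ := M * u with hM₁_def
    have hMu : ∀ b, M₁ L b = if b = j then 1 else 0 := by
      intro b
      rw [hM₁_def, Matrix.mul_apply]
      have key : ∀ a ∈ Finset.univ, M L a * u a b =
          (if a = b then M L b * (if b = j then c⁻¹ else 1) else 0) +
          (if a = j then (if j < b then M L j * (-(M L b) * c⁻¹) else 0) else 0) := by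
        intro a _
        by_cases h1 : a = b
        · subst h1
          by_cases h2 : a = j
          · subst h2; simp [hu_def]
          · simp [hu_def, h2]
        · by_cases h2 : a = j
          · subst h2; simp [hu_def, h1, Ne.symm h1]
          · simp [hu_def, h1, h2]
      rw [Finset.sum_congr rfl key, Finset.sum_add_distrib]
      simp only [Finset.sum_ite_eq', Finset.mem_univ, if_true]
      by_cases hbj : b = j
      · subst hbj
        simp [mul_inv_cancel₀ hj]
        exact mul_inv_cancel₀ hj
      · rcases lt_or_gt_of_ne hbj with hlt | hgt
        · simp [hmin b hlt, not_lt.mpr hlt.le, hbj]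
        · simp only [hbj, if_false, hgt, if_true]
          have hj' : M L j ≠ 0 := hj
          rw [hc_def]
          field_simp
          ring
      -- done
    -- row elimination matrix l
    set l : Matrix (Fin (n + 1)) (Fin (n + 1)) k :=
      Matrix.of (fun a b => if a = b then 1
        else if b = L ∧ a ≠ L then -(M₁ a j) else 0) with hl_def
    have hl_ut : IsUpperTriangular l := by
      intro a b hlt
      have h1 : a ≠ b := (Fin.ne_of_lt hlt).symm
      have h2 : ¬(b = L ∧ a ≠ L) := by
        rintro ⟨rfl, _⟩
        exact absurd (Fin.le_last a) (not_le.mpr hlt)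
      simp [hl_def, h1, h2]
    have hl_det : l.det ≠ 0 := by
      rw [Matrix.det_of_upperTriangular hl_ut.blockTriangular]
      have : ∀ a, l a a = 1 := by intro a; simp [hl_def]
      simp [this]
    set N := l * M₁ with hN_def
    have hN_row : ∀ b, N L b = if b = j then 1 else 0 := by
      intro b
      rw [hN_def, Matrix.mul_apply]
      have : ∀ a, l L a * M₁ a b = if a = L then M₁ L b else 0 := by
        intro a
        by_cases h : a = L
        · subst h; simp [hl_def]
        · simp [hl_def, Ne.symm h, h]
      simp_rw [this]
      simp [hMu b]
    have hN_col : ∀ i, i ≠ L → N i j = 0 := by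
      intro i hi
      rw [hN_def, Matrix.mul_apply]
      have key : ∀ a ∈ Finset.univ, l i a * M₁ a j =
          (if a = i then M₁ i j else 0) +
          (if a = L then -(M₁ i j) * M₁ L j else 0) := by
        intro a _
        by_cases h1 : a = i
        · subst h1
          simp [hl_def, hi]
        · by_cases h2 : a = L
          · subst h2
            simp [hl_def, h1, Ne.symm h1, hi]
          · simp [hl_def, h1, Ne.symm h1, h2]
      rw [Finset.sum_congr rfl key, Finset.sum_add_distrib]
      simp only [Finset.sum_ite_eq', Finset.mem_univ, if_true]
      rw [hMu j]
      simp
    have hN_sub : ∀ (i' : Fin n) (b' : Fin n),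
        N (Fin.castSucc i') (j.succAbove b') = (N.submatrix Fin.castSucc j.succAbove) i' b' :=
      fun _ _ => rfl
    have hN_det : N.det ≠ 0 := by
      rw [hN_def, hM₁_def, Matrix.det_mul, Matrix.det_mul]
      exact mul_ne_zero hl_det (mul_ne_zero hMdet hu_det)
    -- the submatrix
    set A' := N.submatrix Fin.castSucc j.succAbove with hA'_def
    have hA'_det : A'.det ≠ 0 := by
      have hexp := Matrix.det_succ_row N L
      rw [Finset.sum_eq_single j] at hexp
      · rw [hN_row j, if_pos rfl, mul_one] at hexp
        have hsub : N.submatrix L.succAbove j.succAbove = A' := by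
          rw [hA'_def, hL, Fin.succAbove_last]
        rw [hsub] at hexp
        intro h0
        rw [h0, mul_zero] at hexp
        exact hN_det hexp
      · intro b _ hb
        rw [hN_row b, if_neg hb]
        ring
      · intro h; exact absurd (Finset.mem_univ j) h
    obtain ⟨σ', b₁', b₂', hb₁ut, hb₂ut, hd₁, hd₂, hA'eq⟩ := ih A' hA'_det
    -- assemble the (n+1)-dimensional data
    set B₁ := ext1 L b₁' with hB₁_def
    set B₂ := ext1 j b₂' with hB₂_def
    set σ : Equiv.Perm (Fin (n + 1)) :=
      (finSuccEquiv' j).trans ((Equiv.optionCongr σ').trans (finSuccEquiv' L).symm) with hσ_def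
    have hσj : σ j = L := by
      simp [hσ_def, finSuccEquiv'_at, finSuccEquiv'_symm_none]
    have hσab : ∀ x : Fin n, σ (j.succAbove x) = Fin.castSucc (σ' x) := by
      intro x
      simp [hσ_def, finSuccEquiv'_succAbove, finSuccEquiv'_symm_some, hL, Fin.succAbove_last]
    have hσsymmL : σ.symm L = j := by
      rw [← hσj, Equiv.symm_apply_apply]
    have hσsymm : ∀ y : Fin n, σ.symm (Fin.castSucc y) = j.succAbove (σ'.symm y) := by
      intro y
      rw [Equiv.symm_apply_eq, hσab, Equiv.apply_symm_apply]
    -- key identity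
    have hNeq : N = B₁ * permMat σ * B₂ := by
      rw [Matrix.mul_assoc]
      ext i b
      rw [Matrix.mul_apply]
      have hentry : ∀ a, ((permMat σ : Matrix (Fin (n + 1)) (Fin (n + 1)) k) * B₂) a b = B₂ (σ.symm a) b :=
        fun a => permMat_mul_apply σ B₂ a b
      simp_rw [hentry]
      by_cases hi : i = L
      · subst hi
        have : ∀ a, B₁ L a * B₂ (σ.symm a) b = if a = L then B₂ j b else 0 := by
          intro a
          rw [hB₁_def, ext1_apply_row]
          by_cases h : a = L
          · subst h; simp [hσsymmL]
          · simp [h]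
        simp_rw [this]
        rw [Finset.sum_ite_eq' Finset.univ L]
        simp only [Finset.mem_univ, if_true]
        rw [hB₂_def, ext1_apply_row, hN_row]
      · obtain ⟨i', rfl⟩ : ∃ i', Fin.castSucc i' = i := by
          obtain ⟨i', hi'⟩ := Fin.exists_succAbove_eq hi
          exact ⟨i', by rw [← hi', hL, Fin.succAbove_last]⟩
        rw [Fin.sum_univ_succAbove (fun a => B₁ (Fin.castSucc i') a * B₂ (σ.symm a) b) L]
        have hterm0 : B₁ (Fin.castSucc i') L * B₂ (σ.symm L) b = 0 := by
          have : B₁ (Fin.castSucc i') L = 0 := by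
            rw [hB₁_def, ← Fin.succAbove_last, ← hL]
            exact ext1_apply_col L b₁' i'
          rw [this, zero_mul]
        rw [hterm0, zero_add]
        have hterm : ∀ a' : Fin n, B₁ (Fin.castSucc i') (L.succAbove a') * B₂ (σ.symm (L.succAbove a')) b
            = b₁' i' a' * B₂ (j.succAbove (σ'.symm a')) b := by
          intro a'
          rw [hL, Fin.succAbove_last]
          rw [hσsymm a']
          congr 1
          rw [hB₁_def, ← Fin.succAbove_last, ← hL]
          exact ext1_apply_succAbove L b₁' i' a'
        simp_rw [hterm]
        by_cases hb : b = j
        · subst hb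
          have : ∀ a' : Fin n, b₁' i' a' * B₂ (j.succAbove (σ'.symm a')) j = 0 := by
            intro a'
            rw [hB₂_def, ext1_apply_col, mul_zero]
          simp_rw [this]
          rw [Finset.sum_const_zero, hN_col _ (by rw [hL]; exact (Fin.castSucc_lt_last i').ne)]
        · obtain ⟨b', rfl⟩ := Fin.exists_succAbove_eq hb
          have : ∀ a' : Fin n, b₁' i' a' * B₂ (j.succAbove (σ'.symm a')) (j.succAbove b')
              = b₁' i' a' * b₂' (σ'.symm a') b' := by
            intro a'
            rw [hB₂_def, ext1_apply_succAbove]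
          simp_rw [this]
          have hrhs : N (Fin.castSucc i') (j.succAbove b')
              = (b₁' * (permMat σ' : Matrix (Fin n) (Fin n) k) * b₂') i' b' := by
            rw [hN_sub, hA'eq]
          rw [hrhs, Matrix.mul_assoc, Matrix.mul_apply]
          congr 1
          ext a'
          rw [permMat_mul_apply]
    -- solve for M
    have hlu : IsUnit l.det := isUnit_iff_ne_zero.mpr hl_det
    have huu : IsUnit u.det := isUnit_iff_ne_zero.mpr hu_det
    have hM : M = l⁻¹ * N * u⁻¹ := by
      rw [hN_def, hM₁_def, ← Matrix.mul_assoc l⁻¹ l (M * u), Matrix.nonsing_inv_mul l hlu,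
        Matrix.one_mul, Matrix.mul_assoc, Matrix.mul_nonsing_inv u huu, Matrix.mul_one]
    refine ⟨σ, l⁻¹ * B₁, B₂ * u⁻¹, ?_, ?_, ?_, ?_, ?_⟩
    · exact (hl_ut.inv hl_det).mul (ext1_upperTriangular L hb₁ut)
    · exact (ext1_upperTriangular j hb₂ut).mul (hu_ut.inv hu_det)
    · rw [Matrix.det_mul]
      exact mul_ne_zero (det_inv_ne_zero hl_det) (by rw [hB₁_def, ext1_det]; exact hd₁)
    · rw [Matrix.det_mul]
      exact mul_ne_zero (by rw [hB₂_def, ext1_det]; exact hd₂) (det_inv_ne_zero hu_det)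
    · rw [hM, hNeq]
      noncomm_ring

end Main

/-- Existence part of the Bruhat decomposition of `GL_n(k)`: every invertible matrix
lies in a double coset `B P_σ B` of the group `B` of invertible upper triangular matrices. -/
theorem bruhat_decomposition_existence {k : Type*} [Field k] {n : ℕ} (hn : 1 ≤ n)
    (A : GL (Fin n) k) :
    ∃ (σ : Equiv.Perm (Fin n)) (b₁ b₂ : GL (Fin n) k),
      IsUpperTriangular (b₁ : Matrix (Fin n) (Fin n) k) ∧
      IsUpperTriangular (b₂ : Matrix (Fin n) (Fin n) k) ∧
      (A : Matrix (Fin n) (Fin n) k) = (b₁ : Matrix (Fin n) (Fin n) k) * permMat σ * (b₂ : Matrix (Fin n) (Fin n) k) := by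
  have hdet : (A : Matrix (Fin n) (Fin n) k).det ≠ 0 := by
    exact ((Matrix.isUnit_iff_isUnit_det _).mp A.isUnit).ne_zero
  obtain ⟨σ, b₁, b₂, h₁, h₂, hd₁, hd₂, heq⟩ := bruhat_matrix n (A : Matrix (Fin n) (Fin n) k) hdet
  exact ⟨σ, Matrix.GeneralLinearGroup.mkOfDetNeZero b₁ hd₁,
    Matrix.GeneralLinearGroup.mkOfDetNeZero b₂ hd₂, h₁, h₂, heq⟩
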